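/- Let (aᵢ)_{i∈I} be a countable family of nonnegative reals with finite counting function, and let δ := inf{s : Σᵢ e^{−saᵢ} < ∞} < ∞. Suppose h : ℝ → (0, ∞) is a non-decreasing function with the property that for every ε > 0 there exists t₀ > 0 such that h(st) ≤ s^ε h(t) for all t > t₀ and s > 1. Then for every s > δ, the series Σᵢ h(aᵢ) e^{−s aᵢ} converges. -/

import Mathlib

/-- Patterson's construction: if h is non-decreasing, positive, and
slowly varying in Patterson's sense, then the modified Poincaré series
Σᵢ h(aᵢ) e^{−s aᵢ} converges for every s above the abscissa of convergence δ of
Σᵢ e^{−s aᵢ}. -/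
theorem stmt_9 {I : Type*} [Countable I] (a : I → ℝ) (ha : ∀ i, 0 ≤ a i)
    (hfin : ∀ T : ℝ, {i : I | a i ≤ T}.Finite)
    (δ : ℝ) (hδ : IsGLB {s : ℝ | Summable fun i => Real.exp (-s * a i)} δ)
    (h : ℝ → ℝ) (hpos : ∀ t, 0 < h t) (hmono : Monotone h)
    (hslow : ∀ ε > (0 : ℝ), ∃ t₀ > (0 : ℝ), ∀ t > t₀, ∀ s > (1 : ℝ),
      h (s * t) ≤ s ^ ε * h t) :
    ∀ s > δ, Summable fun i => h (a i) * Real.exp (-s * a i) := by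
  -- First: summability holds for every exponent above δ.
  have key : ∀ r : ℝ, δ < r → Summable fun i => Real.exp (-r * a i) := by
    intro r hr
    obtain ⟨u, hu, hur⟩ : ∃ u ∈ {s : ℝ | Summable fun i => Real.exp (-s * a i)}, u < r := by
      by_contra hcon
      push_neg at hcon
      exact absurd (hδ.2 hcon) (not_le.mpr hr)
    refine Summable.of_nonneg_of_le (fun i => (Real.exp_pos _).le) (fun i => ?_) hu
    exact Real.exp_le_exp.mpr (by nlinarith [ha i, hur.le])
  intro s hs
  set r : ℝ := (s + δ) / 2 with hr
  have hδr : δ < r := by simp only [hr]; linarith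
  have hrs : r < s := by simp only [hr]; linarith
  set c : ℝ := s - r with hc
  have hc0 : 0 < c := by simp only [hc]; linarith
  -- Linear growth bound: ∃ K, ∀ t ≥ 0, h t ≤ K * exp (c * t)
  obtain ⟨t₀, ht₀, hsl⟩ := hslow 1 one_pos
  set t₁ : ℝ := t₀ + 1 with ht₁
  have ht₁0 : 0 < t₁ := by linarith
  have ht₁t₀ : t₀ < t₁ := by simp only [ht₁]; linarith
  set K : ℝ := h t₁ * (1 + 1 / (t₁ * c)) with hK
  have hbound : ∀ t : ℝ, 0 ≤ t → h t ≤ K * Real.exp (c * t) := by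
    intro t ht
    have h1exp : (1 : ℝ) ≤ Real.exp (c * t) :=
      Real.one_le_exp (by positivity)
    have hKpos : h t₁ ≤ K := by
      have : (1 : ℝ) ≤ 1 + 1 / (t₁ * c) := by
        have : 0 < t₁ * c := by positivity
        have := (div_pos one_pos this).le
        linarith
      nlinarith [(hpos t₁).le]
    rcases le_or_gt t t₁ with hle | hgt
    · calc h t ≤ h t₁ := hmono hle
        _ ≤ K := hKpos
        _ = K * 1 := (mul_one K).symm
        _ ≤ K * Real.exp (c * t) := by
            have hK0 : 0 < K := lt_of_lt_of_le (hpos t₁) hKpos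
            nlinarith
    · -- t > t₁ : h t ≤ (t/t₁) h t₁ ≤ h t₁ * t / t₁, and t ≤ exp(ct)/c
      have hσ : (1 : ℝ) < t / t₁ := (one_lt_div ht₁0).mpr hgt
      have := hsl t₁ ht₁t₀ (t / t₁) hσ
      rw [div_mul_cancel₀ _ (ne_of_gt ht₁0), Real.rpow_one] at this
      -- this : h t ≤ (t / t₁) * h t₁
      have htexp : c * t ≤ Real.exp (c * t) := by
        have := Real.add_one_le_exp (c * t); linarith
      have h2 : t / t₁ * h t₁ ≤ h t₁ * (1 / (t₁ * c)) * Real.exp (c * t) := by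
        have hht₁ : 0 < h t₁ := hpos t₁
        rw [div_mul_eq_mul_div, mul_comm t (h t₁), mul_div_assoc]
        have : t / t₁ ≤ 1 / (t₁ * c) * Real.exp (c * t) := by
          rw [div_le_iff₀ ht₁0]
          have heq : 1 / (t₁ * c) * Real.exp (c * t) * t₁ = Real.exp (c * t) / c := by
            field_simp
          rw [heq, le_div_iff₀ hc0]
          nlinarith [htexp]
        nlinarith
      calc h t ≤ t / t₁ * h t₁ := this
        _ ≤ h t₁ * (1 / (t₁ * c)) * Real.exp (c * t) := h2
        _ ≤ K * Real.exp (c * t) := by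
            have he := Real.exp_pos (c * t)
            have hht₁ := hpos t₁
            simp only [hK]
            nlinarith
  -- Compare with K * exp(-r * a i)
  have hsum := (key r hδr).mul_left K
  refine Summable.of_nonneg_of_le (fun i => ?_) (fun i => ?_) hsum
  · exact mul_nonneg (hpos _).le (Real.exp_pos _).le
  · have hb := hbound (a i) (ha i)
    have : K * Real.exp (c * a i) * Real.exp (-s * a i) = K * Real.exp (-r * a i) := by
      rw [mul_assoc, ← Real.exp_add, hc]; ring_nf
    rw [← this]
    have := Real.exp_pos (-s * a i)
    nlinarith
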